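/- Let Δ be a countable distance value set and let X be the universal countable Δ-metric space (the Fraïssé limit of finite Δ-metric spaces), characterized by the Urysohn property. Let A ⊆ X be finite, p a nontrivial 1-type over A realized by x and y (i.e. d(x,a) = d(y,a) for all a ∈ A, x,y ∉ A), and s ∈ Δ with s ≤ 2·d(x,A). Then there exist m ∈ ℕ and points x₀ = x, x₁, …, x_{m-1}, x_m = y in X, all realizing p, with d(x_{i-1}, x_i) = s for all i = 1,…,m. -/

import Mathlib

structure DistanceValueSet (Δ : Set ℝ) : Prop where
  nonempty : Δ.Nonempty
  pos : ∀ d ∈ Δ, 0 < d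
  closed_bdd : BddAbove Δ → ∀ x ∈ Δ, ∀ y ∈ Δ, min (x + y) (sSup Δ) ∈ Δ
  closed_unbdd : ¬BddAbove Δ → ∀ x ∈ Δ, ∀ y ∈ Δ, x + y ∈ Δ

def IsDeltaMetric (Δ : Set ℝ) (X : Type*) [MetricSpace X] : Prop :=
  ∀ x y : X, x ≠ y → dist x y ∈ Δ

/-- The Urysohn property for a Δ-metric space: every Katětov function over a finite
subset is realized. -/
def UrysohnProp (Δ : Set ℝ) (X : Type*) [MetricSpace X] : Prop :=
  ∀ (A : Finset X) (f : X → ℝ), (∀ a ∈ A, f a ∈ Δ) →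
    (∀ a ∈ A, ∀ b ∈ A, |f a - f b| ≤ dist a b ∧ dist a b ≤ f a + f b) →
    ∃ x : X, ∀ a ∈ A, dist x a = f a

/-- In the universal countable Δ-metric space, any two realizations `x, y` of a
nontrivial 1-type over a finite set `A` can be joined by a chain of realizations with
consecutive distances equal to any `s ∈ Δ` with `s ≤ 2 d(x, A)`. -/
theorem stmt_13 (Δ : Set ℝ) (hΔ : DistanceValueSet Δ)
    (X : Type) [MetricSpace X] [Countable X]
    (hX : IsDeltaMetric Δ X) (hU : UrysohnProp Δ X)
    (A : Finset X) (hA : A.Nonempty) (x y : X) (hx : x ∉ A) (hy : y ∉ A)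
    (htype : ∀ a ∈ A, dist x a = dist y a)
    (s : ℝ) (hs : s ∈ Δ) (hsle : ∀ a ∈ A, s ≤ 2 * dist x a) :
    ∃ (m : ℕ) (z : Fin (m + 1) → X), z 0 = x ∧ z (Fin.last m) = y ∧
      (∀ (i : Fin (m + 1)), ∀ a ∈ A, dist (z i) a = dist x a) ∧
      ∀ i : Fin m, dist (z i.castSucc) (z i.succ) = s := by
  classical
  have hspos : 0 < s := hΔ.pos s hs
  -- positive multiples of s below an element of Δ are in Δ
  have mult : ∀ t ∈ Δ, ∀ k : ℕ, ((k : ℝ) + 1) * s ≤ t → ((k : ℝ) + 1) * s ∈ Δ := by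
    intro t ht k
    induction k with
    | zero => intro _; simpa using hs
    | succ k ih =>
      intro hle
      have hk1 : ((k : ℝ) + 1) * s ≤ ((k : ℝ) + 1 + 1) * s := by nlinarith
      push_cast at hle ⊢
      have hk : ((k : ℝ) + 1) * s ∈ Δ := ih (by push_cast; linarith)
      by_cases hb : BddAbove Δ
      · have hM : t ≤ sSup Δ := le_csSup hb ht
        have := hΔ.closed_bdd hb _ hk s hs
        have hmin : min (((k : ℝ) + 1) * s + s) (sSup Δ) = ((k : ℝ) + 1 + 1) * s := by
          rw [min_eq_left (by linarith)]; ring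
        rw [hmin] at this; exact this
      · have := hΔ.closed_unbdd hb _ hk s hs
        have : ((k : ℝ) + 1) * s + s ∈ Δ := this
        convert this using 1; ring
  -- the step lemma: extend by a point at distance s from u and r' from y
  have step : ∀ u : X, (∀ a ∈ A, dist u a = dist x a) → ∀ r' ∈ Δ,
      (∀ a ∈ A, r' ≤ 2 * dist x a) → |s - r'| ≤ dist u y → dist u y ≤ s + r' →
      0 < dist u y →
      ∃ w : X, dist w u = s ∧ dist w y = r' ∧ ∀ a ∈ A, dist w a = dist x a := by
    intro u hu r' hr' hr'le h1 h2 hpos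
    have huy : u ≠ y := by
      intro h; rw [h, dist_self] at hpos; exact lt_irrefl 0 hpos
    have hr'pos : 0 < r' := hΔ.pos r' hr'
    have hane : ∀ a ∈ A, a ≠ u ∧ a ≠ y := by
      intro a ha
      have hxa : 0 < dist x a := dist_pos.2 fun h => hx (h ▸ ha)
      constructor
      · intro h
        have h0 := hu a ha
        rw [← h, dist_self] at h0
        linarith
      · intro h; exact hy (h ▸ ha)
    set f : X → ℝ := fun v => if v = u then s else if v = y then r' else dist x v with hf
    have hfu : f u = s := by simp [hf]
    have hfy : f y = r' := by simp [hf, huy.symm]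
    have hfa : ∀ a ∈ A, f a = dist x a := by
      intro a ha
      obtain ⟨h1', h2'⟩ := hane a ha
      simp [hf, h1', h2']
    have hya : ∀ a ∈ A, dist y a = dist x a := fun a ha => (htype a ha).symm
    have key : ∀ a ∈ insert u (insert y A), ∀ b ∈ insert u (insert y A),
        |f a - f b| ≤ dist a b ∧ dist a b ≤ f a + f b := by
      intro a ha b hb
      simp only [Finset.mem_insert] at ha hb
      have hxapos : ∀ c ∈ A, 0 < dist x c := by
        intro c hc; exact dist_pos.2 fun h => hx (h ▸ hc)
      rcases ha with ha | ha | ha <;> rcases hb with hb | hb | hb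
      · rw [ha, hb, hfu, dist_self]
        refine ⟨by simp, by linarith⟩
      · rw [ha, hb, hfu, hfy]; exact ⟨h1, h2⟩
      · rw [ha, hfu, hfa b hb, hu b hb, abs_sub_le_iff]
        refine ⟨⟨by linarith [hsle b hb], by linarith [hxapos b hb]⟩, by linarith [hxapos b hb]⟩
      · rw [ha, hb, hfy, hfu, dist_comm y u, abs_sub_comm]
        exact ⟨h1, by linarith⟩
      · rw [ha, hb, hfy, dist_self]
        refine ⟨by simp, by linarith⟩
      · rw [ha, hfy, hfa b hb, hya b hb, abs_sub_le_iff]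
        refine ⟨⟨by linarith [hr'le b hb], by linarith [hxapos b hb]⟩, by linarith [hxapos b hb]⟩
      · rw [hb, hfa a ha, hfu, dist_comm a u, hu a ha, abs_sub_le_iff]
        refine ⟨⟨by linarith [hxapos a ha], by linarith [hsle a ha]⟩, by linarith [hxapos a ha]⟩
      · rw [hb, hfa a ha, hfy, dist_comm a y, hya a ha, abs_sub_le_iff]
        refine ⟨⟨by linarith [hxapos a ha], by linarith [hr'le a ha]⟩, by linarith [hxapos a ha]⟩
      · rw [hfa a ha, hfa b hb]
        constructor
        · calc |dist x a - dist x b| = |dist a x - dist b x| := by rw [dist_comm x a, dist_comm x b]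
            _ ≤ dist a b := abs_dist_sub_le a b x
        · calc dist a b ≤ dist a x + dist x b := dist_triangle a x b
            _ = dist x a + dist x b := by rw [dist_comm a x]
    have hfΔ : ∀ a ∈ insert u (insert y A), f a ∈ Δ := by
      intro a ha
      simp only [Finset.mem_insert] at ha
      rcases ha with ha | ha | ha
      · rw [ha, hfu]; exact hs
      · rw [ha, hfy]; exact hr'
      · rw [hfa a ha]
        exact hX x a (fun h => hx (h ▸ ha))
    obtain ⟨w, hw⟩ := hU (insert u (insert y A)) f hfΔ key
    refine ⟨w, ?_, ?_, ?_⟩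
    · rw [hw u (Finset.mem_insert_self _ _), hfu]
    · rw [hw y (Finset.mem_insert_of_mem (Finset.mem_insert_self _ _)), hfy]
    · intro a ha
      rw [hw a (Finset.mem_insert_of_mem (Finset.mem_insert_of_mem ha)), hfa a ha]
  -- the chain predicate
  set Chain : X → Prop := fun u => ∃ (m : ℕ) (z : Fin (m + 1) → X), z 0 = u ∧
      z (Fin.last m) = y ∧ (∀ (i : Fin (m + 1)), ∀ a ∈ A, dist (z i) a = dist x a) ∧
      ∀ i : Fin m, dist (z i.castSucc) (z i.succ) = s with hChain
  have trivialChain : Chain y := by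
    refine ⟨0, fun _ => y, rfl, rfl, ?_, fun i => i.elim0⟩
    intro _ a ha; exact (htype a ha).symm
  have single : ∀ u : X, (∀ a ∈ A, dist u a = dist x a) → dist u y = s → Chain u := by
    intro u hu huy
    refine ⟨1, Fin.cons u (fun _ => y), Fin.cons_zero _ _, ?_, ?_, ?_⟩
    · rw [show (Fin.last 1) = (0 : Fin 1).succ from rfl, Fin.cons_succ]
    · intro i a ha
      refine Fin.cases ?_ ?_ i
      · rw [Fin.cons_zero]; exact hu a ha
      · intro j; rw [Fin.cons_succ]; exact (htype a ha).symm
    · intro i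
      refine Fin.cases ?_ (fun j => j.elim0) i
      rw [Fin.castSucc_zero, Fin.cons_zero, Fin.cons_succ]
      exact huy
  have prepend : ∀ u w : X, (∀ a ∈ A, dist u a = dist x a) → dist u w = s →
      Chain w → Chain u := by
    intro u w hu huw ⟨m, z, hz0, hzl, hzA, hzd⟩
    refine ⟨m + 1, Fin.cons u z, Fin.cons_zero _ _, ?_, ?_, ?_⟩
    · rw [← Fin.succ_last, Fin.cons_succ]; exact hzl
    · intro i a ha
      refine Fin.cases ?_ ?_ i
      · rw [Fin.cons_zero]; exact hu a ha
      · intro j; rw [Fin.cons_succ]; exact hzA j a ha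
    · intro i
      refine Fin.cases ?_ ?_ i
      · rw [Fin.castSucc_zero, Fin.cons_zero, Fin.cons_succ, hz0]
        exact huw
      · intro j
        rw [← Fin.succ_castSucc, Fin.cons_succ, Fin.cons_succ]
        exact hzd j
  -- main induction
  have main : ∀ n : ℕ, ∀ u : X, (∀ a ∈ A, dist u a = dist x a) →
      dist u y ≤ ((n : ℝ) + 2) * s → Chain u := by
    intro n
    induction n with
    | zero =>
      intro u hu hle
      by_cases huy : u = y
      · rw [huy]; exact trivialChain
      have hpos : 0 < dist u y := dist_pos.2 huy
      by_cases heq : dist u y = s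
      · exact single u hu heq
      · -- midpoint: take r' = s
        obtain ⟨w, hwu, hwy, hwA⟩ := step u hu s hs hsle (by simp) (by push_cast at hle; linarith) hpos
        exact prepend u w hu (by rw [dist_comm]; exact hwu) (single w hwA hwy)
    | succ n ih =>
      intro u hu hle
      by_cases hle' : dist u y ≤ ((n : ℝ) + 2) * s
      · exact ih u hu hle'
      push_neg at hle'
      have hpos : 0 < dist u y := lt_trans (by positivity) hle'
      have huy : u ≠ y := fun h => by rw [h, dist_self] at hpos; exact lt_irrefl 0 hpos
      have ht : dist u y ∈ Δ := hX u y huy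
      have hr'' : ((n : ℝ) + 2) * s ∈ Δ := by
        have h2 := mult (dist u y) ht (n + 1) (by push_cast; linarith)
        push_cast at h2
        convert h2 using 2
        ring
      have h2d : ∀ a ∈ A, ((n : ℝ) + 2) * s ≤ 2 * dist x a := by
        intro a ha
        have : dist u y ≤ dist u a + dist a y := dist_triangle u a y
        rw [hu a ha, dist_comm a y, ← htype a ha] at this
        linarith
      obtain ⟨w, hwu, hwy, hwA⟩ := step u hu (((n : ℝ) + 2) * s) hr'' h2d
        (by rw [abs_sub_le_iff]
            constructor
            · nlinarith
            · push_cast at hle; linarith)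
        (by push_cast at hle; linarith) hpos
      refine prepend u w hu (by rw [dist_comm]; exact hwu) ?_
      exact ih w hwA (by rw [hwy])
  obtain ⟨n, hn⟩ := exists_nat_ge (dist x y / s)
  have hxy : dist x y ≤ ((n : ℝ) + 2) * s := by
    have := (div_le_iff₀ hspos).1 hn
    nlinarith [dist_nonneg (x := x) (y := y)]
  exact main n x (fun a _ => rfl) hxy
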